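/- arXiv:2503.15164 — 2 statements merged into one kernel-verified Lean document; each statement's English description precedes it below -/
import Mathlib

section
/- Let N ≥ 2, M = (N−1)² + 1, U ∈ (0,1), and let (cₖ, fₖ, θₖ), k = 1,…,K, with K < N, cₖ ∈ ℂ \ {0}, fₖ ∈ [0,1), θₖ ∈ [0,U], and the pairs (fₖ,θₖ) pairwise distinct. Set z* = Σₖ cₖ d(fₖ,θₖ), x = P z*, and D = {(fₖ,θₖ)}ₖ. Suppose: (1) there exists q ∈ ℂ^N such that the dual polynomial Q(f,θ) = Σ_{n=0}^{N−1} q(n) e^{−2πi(fn+θn²)} satisfies Q(fₖ,θₖ) = cₖ/|cₖ| for every k and |Q(f,θ)| < 1 for every (f,θ) ∈ [0,1)×[0,U] with (f,θ) ∉ D; and (2) the vectors {P d(fₖ,θₖ) : k = 1,…,K} ⊂ ℂ^N are linearly independent over ℂ. Then z* is the unique minimizer of ‖z‖_{A_c} over all z ∈ ℂ^{NM} satisfying P z = x. -/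
open Complex Set
open scoped Real ENNReal ComplexConjugate ComplexOrder

noncomputable section

def atomA (N : ℕ) (f : ℝ) : Fin N → ℂ :=
  fun n => Complex.exp (2 * (Real.pi : ℂ) * Complex.I * ((n : ℕ) : ℂ) * (f : ℂ))

def atomB (N : ℕ) (θ : ℝ) : Fin ((N - 1) ^ 2 + 1) → ℂ :=
  fun m => Complex.exp (2 * (Real.pi : ℂ) * Complex.I * ((m : ℕ) : ℂ) * (θ : ℂ))

def atomD (N : ℕ) (f θ : ℝ) : Fin N × Fin ((N - 1) ^ 2 + 1) → ℂ :=
  fun p => atomA N f p.1 * atomB N θ p.2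

def meas (N : ℕ) (z : Fin N × Fin ((N - 1) ^ 2 + 1) → ℂ) : Fin N → ℂ :=
  fun n => z (n, ⟨n.1 ^ 2, by
    have h1 : n.1 < N := n.2
    have h2 : n.1 ^ 2 ≤ (N - 1) ^ 2 := Nat.pow_le_pow_left (by omega) 2
    omega⟩)

def atomicNorm (N : ℕ) (U : ℝ) (z : Fin N × Fin ((N - 1) ^ 2 + 1) → ℂ) : ℝ≥0∞ :=
  sInf { s : ℝ≥0∞ | ∃ (K : ℕ) (c : Fin K → ℂ) (f θ : Fin K → ℝ),
    (∀ k, f k ∈ Set.Ico (0 : ℝ) 1) ∧ (∀ k, θ k ∈ Set.Icc (0 : ℝ) U) ∧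
    z = ∑ k, c k • atomD N (f k) (θ k) ∧
    s = ∑ k, ENNReal.ofReal ‖c k‖ }

def dualPoly (N : ℕ) (q : Fin N → ℂ) (f θ : ℝ) : ℂ :=
  ∑ n : Fin N, q n * Complex.exp (-(2 * (Real.pi : ℂ) * Complex.I) *
    ((f : ℂ) * ((n : ℕ) : ℂ) + (θ : ℂ) * ((n : ℕ) : ℂ) ^ 2))

def twoFoldToep (N : ℕ) (T : ℤ → ℤ → ℂ) :
    Matrix (Fin N × Fin ((N - 1) ^ 2 + 1)) (Fin N × Fin ((N - 1) ^ 2 + 1)) ℂ :=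
  Matrix.of fun p q => T (((p.1 : ℕ) : ℤ) - ((q.1 : ℕ) : ℤ)) (((p.2 : ℕ) : ℤ) - ((q.2 : ℕ) : ℤ))

def twoFoldToepG (N : ℕ) (U : ℝ) (T : ℤ → ℤ → ℂ) :
    Matrix (Fin N × Fin ((N - 1) ^ 2)) (Fin N × Fin ((N - 1) ^ 2)) ℂ :=
  Matrix.of fun p q =>
    Complex.exp ((Real.pi : ℂ) * Complex.I * (U : ℂ)) *
        T (((p.1 : ℕ) : ℤ) - ((q.1 : ℕ) : ℤ)) (((p.2 : ℕ) : ℤ) - ((q.2 : ℕ) : ℤ) + 1)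
      + ((-2 * Real.cos (Real.pi * U) : ℝ) : ℂ) *
        T (((p.1 : ℕ) : ℤ) - ((q.1 : ℕ) : ℤ)) (((p.2 : ℕ) : ℤ) - ((q.2 : ℕ) : ℤ))
      + conj (Complex.exp ((Real.pi : ℂ) * Complex.I * (U : ℂ))) *
        T (((p.1 : ℕ) : ℤ) - ((q.1 : ℕ) : ℤ)) (((p.2 : ℕ) : ℤ) - ((q.2 : ℕ) : ℤ) - 1)

def blockMat {ι : Type*} [Fintype ι] (W : Matrix ι ι ℂ) (z : ι → ℂ) (t : ℝ) :
    Matrix (ι ⊕ Unit) (ι ⊕ Unit) ℂ :=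
  Matrix.fromBlocks W (Matrix.of fun i (_ : Unit) => z i)
    (Matrix.of fun (_ : Unit) j => conj (z j)) (Matrix.of fun (_ : Unit) (_ : Unit) => (t : ℂ))

def sdpVal (N : ℕ) (U : ℝ) (z : Fin N × Fin ((N - 1) ^ 2 + 1) → ℂ) : ℝ≥0∞ :=
  sInf { s : ℝ≥0∞ | ∃ (T : ℤ → ℤ → ℂ) (t : ℝ),
    (blockMat (twoFoldToep N T) z t).PosSemidef ∧
    (twoFoldToepG N U T).PosSemidef ∧
    s = ENNReal.ofReal ((1 / (2 * ((N * ((N - 1) ^ 2 + 1) : ℕ) : ℝ))) *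
          ((twoFoldToep N T).trace).re + t / 2) }

def measMat (N : ℕ) : Matrix (Fin N) (Fin N × Fin ((N - 1) ^ 2 + 1)) ℂ :=
  Matrix.of fun n p => if p.1 = n ∧ (p.2 : ℕ) = n.1 ^ 2 then 1 else 0

def gval (U θ : ℝ) : ℂ :=
  Complex.exp ((Real.pi : ℂ) * Complex.I * (U : ℂ)) * Complex.exp (-(2 * (Real.pi : ℂ) * Complex.I) * (θ : ℂ))
    + ((-2 * Real.cos (Real.pi * U) : ℝ) : ℂ)
    + conj (Complex.exp ((Real.pi : ℂ) * Complex.I * (U : ℂ))) * Complex.exp ((2 * (Real.pi : ℂ) * Complex.I) * (θ : ℂ))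

def atomBt (N : ℕ) (θ : ℝ) : Fin ((N - 1) ^ 2) → ℂ :=
  fun m => Complex.exp (2 * (Real.pi : ℂ) * Complex.I * ((m : ℕ) : ℂ) * (θ : ℂ))

def atomDt (N : ℕ) (f θ : ℝ) : Fin N × Fin ((N - 1) ^ 2) → ℂ :=
  fun p => atomA N f p.1 * atomBt N θ p.2
lemma abs_atomD (N : ℕ) (f θ : ℝ) (p : Fin N × Fin ((N - 1) ^ 2 + 1)) :
    ‖atomD N f θ p‖ = 1 := by
  have h1 : (2 * (Real.pi : ℂ) * Complex.I * ((p.1 : ℕ) : ℂ) * (f : ℂ))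
      = ((2 * Real.pi * (p.1 : ℕ) * f : ℝ) : ℂ) * Complex.I := by push_cast; ring
  have h2 : (2 * (Real.pi : ℂ) * Complex.I * ((p.2 : ℕ) : ℂ) * (θ : ℂ))
      = ((2 * Real.pi * (p.2 : ℕ) * θ : ℝ) : ℂ) * Complex.I := by push_cast; ring
  simp only [atomD, atomA, atomB, norm_mul]
  rw [h1, h2, Complex.norm_exp_ofReal_mul_I, Complex.norm_exp_ofReal_mul_I, mul_one]

lemma meas_atomD (N : ℕ) (f θ : ℝ) (n : Fin N) :
    meas N (atomD N f θ) n = Complex.exp (2 * (Real.pi : ℂ) * Complex.I * ((n : ℕ) : ℂ) * (f : ℂ)) *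
      Complex.exp (2 * (Real.pi : ℂ) * Complex.I * (((n : ℕ) : ℂ)) ^ 2 * (θ : ℂ)) := by
  simp only [meas, atomD, atomA, atomB]
  norm_num [pow_two]

lemma conj_meas_atomD (N : ℕ) (f θ : ℝ) (n : Fin N) :
    conj (meas N (atomD N f θ) n) = Complex.exp (-(2 * (Real.pi : ℂ) * Complex.I) *
      ((f : ℂ) * ((n : ℕ) : ℂ) + (θ : ℂ) * ((n : ℕ) : ℂ) ^ 2)) := by
  rw [meas_atomD, map_mul, ← Complex.exp_conj, ← Complex.exp_conj, ← Complex.exp_add]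
  congr 1
  simp only [map_mul, map_pow, Complex.conj_I, map_ofNat, Complex.conj_ofReal, Complex.conj_natCast]
  ring

lemma Lfun_atom (N : ℕ) (q : Fin N → ℂ) (f θ : ℝ) :
    ∑ n : Fin N, q n * conj (meas N (atomD N f θ) n) = dualPoly N q f θ := by
  unfold dualPoly
  exact Finset.sum_congr rfl fun n _ => by rw [conj_meas_atomD]

lemma sum_pad {M : Type*} [AddCommMonoid M] {K' K₀ : ℕ} (hK : K' ≤ K₀) (gF : Fin K' → M) :
    ∑ i : Fin K₀, (if h : i.1 < K' then gF ⟨i.1, h⟩ else 0) = ∑ j, gF j := by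
  rw [Fin.sum_univ_eq_sum_range (fun i => if h : i < K' then gF ⟨i, h⟩ else 0) K₀]
  rw [← Finset.sum_subset (Finset.range_subset_range.2 hK)
      (fun x _ hx => dif_neg (by simpa using hx))]
  rw [← Fin.sum_univ_eq_sum_range (fun i => if h : i < K' then gF ⟨i, h⟩ else 0) K']
  exact Finset.sum_congr rfl fun i _ => by rw [dif_pos i.2]

lemma pad_decomp {V : Type*} [AddCommMonoid V] [Module ℂ V] (D : ℝ → ℝ → V)
    (K' K₀ : ℕ) (hK : K' ≤ K₀)
    (U : ℝ) (hU : 0 ≤ U) (c' : Fin K' → ℂ) (f' θ' : Fin K' → ℝ)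
    (hf' : ∀ j, f' j ∈ Set.Icc (0:ℝ) 1) (hθ' : ∀ j, θ' j ∈ Set.Icc (0:ℝ) U) :
    ∃ (c : Fin K₀ → ℂ) (f θ : Fin K₀ → ℝ),
      (∀ j, f j ∈ Set.Icc (0:ℝ) 1) ∧ (∀ j, θ j ∈ Set.Icc (0:ℝ) U) ∧
      (∑ j, c j • D (f j) (θ j)) = (∑ j, c' j • D (f' j) (θ' j)) ∧
      (∑ j, ‖c j‖) = ∑ j, ‖c' j‖ := by
  classical
  refine ⟨fun i => if h : i.1 < K' then c' ⟨i.1, h⟩ else 0,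
    fun i => if h : i.1 < K' then f' ⟨i.1, h⟩ else 0,
    fun i => if h : i.1 < K' then θ' ⟨i.1, h⟩ else 0, ?_, ?_, ?_, ?_⟩
  · intro j; dsimp only; split
    · exact hf' _
    · exact ⟨le_refl 0, zero_le_one⟩
  · intro j; dsimp only; split
    · exact hθ' _
    · exact ⟨le_refl 0, hU⟩
  · rw [← sum_pad hK (fun j => c' j • D (f' j) (θ' j))]
    refine Finset.sum_congr rfl fun i _ => ?_
    by_cases h : i.1 < K' <;> simp [h]
  · rw [← sum_pad hK (fun j => ‖c' j‖)]
    refine Finset.sum_congr rfl fun i _ => ?_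
    by_cases h : i.1 < K' <;> simp [h]

lemma caratheodory_reduce {V : Type*} [AddCommGroup V] [Module ℝ V] [Module ℂ V]
    [IsScalarTower ℝ ℂ V] [FiniteDimensional ℝ V] (D : ℝ → ℝ → V)
    (U : ℝ) (hU : 0 ≤ U) (z : V) (K' : ℕ) (c' : Fin K' → ℂ) (f' θ' : Fin K' → ℝ)
    (hf' : ∀ j, f' j ∈ Set.Icc (0:ℝ) 1) (hθ' : ∀ j, θ' j ∈ Set.Icc (0:ℝ) U)
    (hz : z = ∑ j, c' j • D (f' j) (θ' j)) :
    ∃ K : ℕ, K ≤ Module.finrank ℝ V + 1 ∧ ∃ (c : Fin K → ℂ) (f θ : Fin K → ℝ),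
      (∀ j, f j ∈ Set.Icc (0:ℝ) 1) ∧ (∀ j, θ j ∈ Set.Icc (0:ℝ) U) ∧
      z = (∑ j, c j • D (f j) (θ j)) ∧
      (∑ j, ‖c j‖) ≤ ∑ j, ‖c' j‖ := by
  classical
  set s : ℝ := ∑ j, ‖c' j‖ with hs_def
  have hs_nonneg : 0 ≤ s := Finset.sum_nonneg fun j _ => norm_nonneg _
  by_cases hs : s = 0
  · refine ⟨0, by omega, fun j => 0, fun j => 0, fun j => 0,
      fun j => j.elim0, fun j => j.elim0, ?_, ?_⟩
    · have hc0 : ∀ j, c' j = 0 := by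
        intro j
        have := (Finset.sum_eq_zero_iff_of_nonneg
          (fun j _ => norm_nonneg (c' j))).1 hs j (Finset.mem_univ j)
        simpa using this
      simp [hz, hc0]
    · simpa using hs_nonneg
  have hs_pos : 0 < s := lt_of_le_of_ne hs_nonneg (Ne.symm hs)
  set A : Set V := {a | ∃ (u : ℂ) (fa θa : ℝ), ‖u‖ = 1 ∧ fa ∈ Set.Icc (0:ℝ) 1 ∧
    θa ∈ Set.Icc (0:ℝ) U ∧ a = u • D fa θa} with hA_def
  set unit : Fin K' → ℂ := fun j => if c' j = 0 then 1 else c' j / ((‖c' j‖ : ℝ) : ℂ)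
    with hunit_def
  have habs_unit : ∀ j, ‖unit j‖ = 1 := by
    intro j
    simp only [hunit_def]
    split
    · simp
    · rename_i h
      rw [norm_div, Complex.norm_real, norm_norm,
        div_self (norm_ne_zero_iff.mpr h)]
  have hsmul : ∀ j, (‖c' j‖) • (unit j • D (f' j) (θ' j))
      = c' j • D (f' j) (θ' j) := by
    intro j
    by_cases h : c' j = 0
    · simp [h, hunit_def]
    · rw [← smul_assoc]
      congr 1
      have hne : ((‖c' j‖ : ℝ) : ℂ) ≠ 0 := by
        simpa using norm_ne_zero_iff.mpr h
      rw [Complex.real_smul]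
      simp only [hunit_def, if_neg h]
      rw [mul_comm, div_mul_cancel₀ _ hne]
  -- membership in the convex hull
  have hmem : s⁻¹ • z ∈ convexHull ℝ A := by
    have hcm : Finset.univ.centerMass (fun j => ‖c' j‖)
        (fun j => unit j • D (f' j) (θ' j)) ∈ convexHull ℝ A :=
      Finset.centerMass_mem_convexHull _ (fun i _ => norm_nonneg _) hs_pos
        (fun i _ => ⟨unit i, f' i, θ' i, habs_unit i, hf' i, hθ' i, rfl⟩)
    rw [hs_def]
    rwa [Finset.centerMass, Finset.sum_congr rfl fun j _ => (hsmul j), ← hz] at hcm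
  obtain ⟨ι, hι, aa, w, hrange, hai, hwpos, hwsum, heq⟩ :=
    eq_pos_convex_span_of_mem_convexHull hmem
  letI : Fintype ι := hι
  have hcard : Fintype.card ι ≤ Module.finrank ℝ V + 1 :=
    le_trans hai.card_le_finrank_succ
      (add_le_add_left (Submodule.finrank_le (vectorSpan ℝ (Set.range aa))) 1)
  refine ⟨Fintype.card ι, hcard, ?_⟩
  set e : Fin (Fintype.card ι) ≃ ι := (Fintype.equivFin ι).symm with he_def
  choose u ff tt hu hmf hmθ hae using fun i : ι => hrange (Set.mem_range_self i)
  refine ⟨fun j => ((s * w (e j) : ℝ) : ℂ) * u (e j), fun j => ff (e j), fun j => tt (e j),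
    fun j => hmf _, fun j => hmθ _, ?_, ?_⟩
  · have hzz : z = s • (s⁻¹ • z) := (smul_inv_smul₀ hs z).symm
    rw [hzz, ← heq, Finset.smul_sum]
    refine (Fintype.sum_equiv e _ _ fun j => ?_).symm
    rw [hae (e j), smul_smul, ← smul_assoc, Complex.real_smul]
  · have habs : ∀ j : Fin (Fintype.card ι),
        ‖((s * w (e j) : ℝ) : ℂ) * u (e j)‖ = s * w (e j) := by
      intro j
      rw [norm_mul, hu (e j), mul_one, Complex.norm_real,
        Real.norm_of_nonneg (mul_nonneg hs_nonneg (hwpos (e j)).le)]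
    calc (∑ j, ‖((s * w (e j) : ℝ) : ℂ) * u (e j)‖)
        = ∑ j, s * w (e j) := Finset.sum_congr rfl fun j _ => habs j
      _ = s * ∑ j, w (e j) := by rw [Finset.mul_sum]
      _ = s * ∑ i, w i := by rw [Fintype.sum_equiv e (fun j => w (e j)) w fun j => rfl]
      _ = s := by rw [hwsum, mul_one]
      _ ≤ ∑ j, ‖c' j‖ := le_of_eq hs_def

lemma atomA_one (N : ℕ) : atomA N 1 = atomA N 0 := by
  funext n
  simp only [atomA, Complex.ofReal_one, mul_one, Complex.ofReal_zero, mul_zero, Complex.exp_zero]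
  have h : 2 * (Real.pi : ℂ) * Complex.I * ((n : ℕ) : ℂ) = ((n : ℕ) : ℤ) * (2 * Real.pi * Complex.I) := by
    push_cast; ring
  rw [h, Complex.exp_int_mul_two_pi_mul_I]

lemma atomD_one (N : ℕ) (θ : ℝ) : atomD N 1 θ = atomD N 0 θ := by
  funext p; simp only [atomD, atomA_one]

/-- Convert an `Icc`-decomposition into an `Ico`-decomposition with the same data. -/
lemma icc_to_ico (N : ℕ) (K : ℕ) (f : Fin K → ℝ) (hf : ∀ j, f j ∈ Set.Icc (0:ℝ) 1) :
    ∃ f' : Fin K → ℝ, (∀ j, f' j ∈ Set.Ico (0:ℝ) 1) ∧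
      ∀ θ : ℝ, ∀ j, atomD N (f' j) θ = atomD N (f j) θ := by
  classical
  refine ⟨fun j => if f j = 1 then 0 else f j, fun j => ?_, fun θ j => ?_⟩
  · dsimp only; split
    · exact ⟨le_refl 0, one_pos⟩
    · exact ⟨(hf j).1, lt_of_le_of_ne (hf j).2 ‹_›⟩
  · dsimp only; split
    · rename_i h; rw [h, atomD_one]
    · rfl

lemma continuous_atomD (N : ℕ) : Continuous fun q : ℝ × ℝ => atomD N q.1 q.2 := by
  apply continuous_pi
  intro p
  simp only [atomD, atomA, atomB]
  fun_prop

def decompSum (N : ℕ) {K : ℕ} (p : (Fin K → ℂ) × (Fin K → ℝ) × (Fin K → ℝ)) :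
    Fin N × Fin ((N - 1) ^ 2 + 1) → ℂ :=
  ∑ j, p.1 j • atomD N (p.2.1 j) (p.2.2 j)

lemma continuous_decompSum (N K : ℕ) :
    Continuous fun p : (Fin K → ℂ) × (Fin K → ℝ) × (Fin K → ℝ) => decompSum N p := by
  apply continuous_pi
  intro x
  have hrw : (fun p : (Fin K → ℂ) × (Fin K → ℝ) × (Fin K → ℝ) => decompSum N p x)
      = fun p => ∑ j, p.1 j * atomD N (p.2.1 j) (p.2.2 j) x := by
    funext p
    simp [decompSum, Finset.sum_apply]
  rw [hrw]
  refine continuous_finset_sum _ fun j _ => ?_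
  have h2 : Continuous fun p : (Fin K → ℂ) × (Fin K → ℝ) × (Fin K → ℝ) =>
      atomD N (p.2.1 j) (p.2.2 j) x := by
    simp only [atomD, atomA, atomB]
    fun_prop
  fun_prop

lemma continuous_abssum (K : ℕ) :
    Continuous fun p : (Fin K → ℂ) × (Fin K → ℝ) × (Fin K → ℝ) =>
      ∑ j, ‖p.1 j‖ := by
  refine continuous_finset_sum _ fun j _ => ?_
  exact continuous_norm.comp (by fun_prop)

lemma atomicNorm_attained (N : ℕ) (U : ℝ) (hU0 : 0 ≤ U)
    (z : Fin N × Fin ((N - 1) ^ 2 + 1) → ℂ) (A : ℝ) (hA : 0 ≤ A)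
    (hnorm : atomicNorm N U z = ENNReal.ofReal A) :
    ∃ (K : ℕ) (c : Fin K → ℂ) (f θ : Fin K → ℝ),
      (∀ j, f j ∈ Set.Ico (0:ℝ) 1) ∧ (∀ j, θ j ∈ Set.Icc (0:ℝ) U) ∧
      z = (∑ j, c j • atomD N (f j) (θ j)) ∧ (∑ j, ‖c j‖) = A := by
  classical
  set K₀ := Module.finrank ℝ (Fin N × Fin ((N - 1) ^ 2 + 1) → ℂ) + 1 with hK₀
  set g : (Fin K₀ → ℂ) × (Fin K₀ → ℝ) × (Fin K₀ → ℝ) → ℝ :=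
    fun p => ∑ j, ‖p.1 j‖ with hg_def
  set S : Set ((Fin K₀ → ℂ) × (Fin K₀ → ℝ) × (Fin K₀ → ℝ)) :=
    {p | (∀ j, p.2.1 j ∈ Set.Icc (0:ℝ) 1) ∧ (∀ j, p.2.2 j ∈ Set.Icc (0:ℝ) U) ∧
      decompSum N p = z ∧ g p ≤ A + 1} with hS_def
  have key : ∀ B : ℝ, atomicNorm N U z < ENNReal.ofReal B → B ≤ A + 1 →
      ∃ p ∈ S, g p < B := by
    intro B hB hBle
    have hB0 : (0:ℝ) < B := by
      rcases lt_or_ge 0 B with h | h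
      · exact h
      · exfalso
        rw [ENNReal.ofReal_of_nonpos h] at hB
        simp at hB
    rw [atomicNorm] at hB
    obtain ⟨s₀, hs₀mem, hs₀lt⟩ := sInf_lt_iff.mp hB
    obtain ⟨K', c', f', θ', hf', hθ', hzdec, hs₀⟩ := hs₀mem
    have hsum_lt : (∑ j, ‖c' j‖) < B := by
      have heq : ENNReal.ofReal (∑ j, ‖c' j‖) = s₀ := by
        rw [hs₀, ENNReal.ofReal_sum_of_nonneg (fun i _ => norm_nonneg _)]
      rw [← heq] at hs₀lt
      exact (ENNReal.ofReal_lt_ofReal_iff hB0).mp hs₀lt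
    obtain ⟨K1, hK1le, c1, f1, θ1, hf1, hθ1, hz1, hsum1⟩ :=
      caratheodory_reduce (atomD N) U hU0 z K' c' f' θ'
        (fun j => Set.Ico_subset_Icc_self (hf' j)) hθ' hzdec
    obtain ⟨c2, f2, θ2, hf2, hθ2, hsum_eq, habs_eq⟩ :=
      pad_decomp (atomD N) K1 K₀ hK1le U hU0 c1 f1 θ1 hf1 hθ1
    have habs2 : (∑ j, ‖c2 j‖) < B := by
      rw [habs_eq]; exact lt_of_le_of_lt hsum1 hsum_lt
    refine ⟨(c2, f2, θ2), ⟨hf2, hθ2, ?_, ?_⟩, habs2⟩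
    · show (∑ j, c2 j • atomD N (f2 j) (θ2 j)) = z
      rw [hsum_eq, ← hz1]
    · exact le_trans habs2.le hBle
  have hgcont : Continuous g := continuous_abssum K₀
  have hScl : IsClosed S := by
    rw [hS_def]
    simp only [Set.setOf_and]
    refine IsClosed.inter ?_ (IsClosed.inter ?_ (IsClosed.inter ?_ ?_))
    · rw [Set.setOf_forall]
      exact isClosed_iInter fun j => IsClosed.preimage (by fun_prop) isClosed_Icc
    · rw [Set.setOf_forall]
      exact isClosed_iInter fun j => IsClosed.preimage (by fun_prop) isClosed_Icc
    · exact isClosed_eq (continuous_decompSum N K₀) continuous_const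
    · exact isClosed_le hgcont continuous_const
  have hSsub : S ⊆ (Set.univ.pi fun _ : Fin K₀ => Metric.closedBall (0:ℂ) (A+1)) ×ˢ
      ((Set.univ.pi fun _ : Fin K₀ => Set.Icc (0:ℝ) 1) ×ˢ
        (Set.univ.pi fun _ : Fin K₀ => Set.Icc (0:ℝ) U)) := by
    rintro ⟨c, f, θ⟩ ⟨h1, h2, h3, h4⟩
    refine ⟨fun j _ => ?_, fun j _ => h1 j, fun j _ => h2 j⟩
    rw [Metric.mem_closedBall, dist_zero_right]
    refine le_trans (Finset.single_le_sum (fun i _ => norm_nonneg (c i))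
      (Finset.mem_univ j)) h4
  have hScomp : IsCompact S :=
    IsCompact.of_isClosed_subset
      ((isCompact_univ_pi fun _ => isCompact_closedBall _ _).prod
        ((isCompact_univ_pi fun _ => isCompact_Icc).prod
          (isCompact_univ_pi fun _ => isCompact_Icc))) hScl hSsub
  have hlt : atomicNorm N U z < ENNReal.ofReal (A+1) := by
    rw [hnorm]
    exact (ENNReal.ofReal_lt_ofReal_iff (by linarith)).mpr (lt_add_one A)
  obtain ⟨p₀, hp₀S, _⟩ := key (A+1) hlt le_rfl
  obtain ⟨pm, hpmS, hpmmin⟩ := hScomp.exists_isMinOn ⟨p₀, hp₀S⟩ hgcont.continuousOn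
  have hm'nonneg : 0 ≤ g pm := Finset.sum_nonneg fun j _ => norm_nonneg _
  obtain ⟨f3, hf3, hatom3⟩ := icc_to_ico N K₀ pm.2.1 hpmS.1
  have hdec : z = ∑ j, pm.1 j • atomD N (f3 j) (pm.2.2 j) := by
    have h := hpmS.2.2.1
    rw [show (∑ j, pm.1 j • atomD N (f3 j) (pm.2.2 j))
        = ∑ j, pm.1 j • atomD N (pm.2.1 j) (pm.2.2 j)
      from Finset.sum_congr rfl fun j _ => by rw [hatom3 _ j]]
    exact h.symm
  have hle1 : atomicNorm N U z ≤ ENNReal.ofReal (g pm) := by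
    rw [atomicNorm]
    refine sInf_le ⟨K₀, pm.1, f3, pm.2.2, hf3, hpmS.2.1, hdec, ?_⟩
    exact ENNReal.ofReal_sum_of_nonneg (fun i _ => norm_nonneg _)
  have hAm' : A ≤ g pm := by
    rw [hnorm] at hle1
    exact (ENNReal.ofReal_le_ofReal_iff hm'nonneg).mp hle1
  have hm'A : g pm ≤ A := by
    refine le_of_forall_pos_le_add fun ε hε => ?_
    have hB : atomicNorm N U z < ENNReal.ofReal (A + min ε 1) := by
      rw [hnorm]
      have hmin : 0 < min ε 1 := lt_min hε one_pos
      exact (ENNReal.ofReal_lt_ofReal_iff (by linarith)).mpr (by linarith)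
    obtain ⟨p', hp'S, hp'lt⟩ := key _ hB (by have := min_le_right ε 1; linarith)
    have h1 : g pm ≤ g p' := isMinOn_iff.mp hpmmin p' hp'S
    have h2 := min_le_left ε 1
    linarith
  exact ⟨K₀, pm.1, f3, pm.2.2, hf3, hpmS.2.1, hdec, le_antisymm hm'A hAm'⟩

lemma meas_sum_smul (N : ℕ) {K : ℕ} (a : Fin K → ℂ)
    (w : Fin K → (Fin N × Fin ((N - 1) ^ 2 + 1) → ℂ)) :
    meas N (∑ k, a k • w k) = ∑ k, a k • meas N (w k) := by
  funext n
  simp [meas, Finset.sum_apply]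

lemma Lfun_sum (N : ℕ) (q : Fin N → ℂ) {K : ℕ} (c : Fin K → ℂ) (f θ : Fin K → ℝ) :
    (∑ n : Fin N, q n * conj (meas N (∑ j, c j • atomD N (f j) (θ j)) n))
      = ∑ j, conj (c j) * dualPoly N q (f j) (θ j) := by
  have hmeas : ∀ n, meas N (∑ j, c j • atomD N (f j) (θ j)) n
      = ∑ j, c j * meas N (atomD N (f j) (θ j)) n := by
    intro n
    rw [meas_sum_smul]
    simp
  calc (∑ n : Fin N, q n * conj (meas N (∑ j, c j • atomD N (f j) (θ j)) n))
      = ∑ n : Fin N, ∑ j, conj (c j) * (q n * conj (meas N (atomD N (f j) (θ j)) n)) := by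
        refine Finset.sum_congr rfl fun n _ => ?_
        rw [hmeas n, map_sum, Finset.mul_sum]
        refine Finset.sum_congr rfl fun j _ => ?_
        rw [map_mul]; ring
    _ = ∑ j, conj (c j) * ∑ n : Fin N, q n * conj (meas N (atomD N (f j) (θ j)) n) := by
        rw [Finset.sum_comm]
        exact Finset.sum_congr rfl fun j _ => by rw [Finset.mul_sum]
    _ = ∑ j, conj (c j) * dualPoly N q (f j) (θ j) := by
        exact Finset.sum_congr rfl fun j _ => by rw [Lfun_atom]

lemma re_term_le (a Q : ℂ) (hQ : ‖Q‖ ≤ 1) :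
    (conj a * Q).re ≤ ‖a‖ := by
  refine le_trans (Complex.re_le_norm _) ?_
  rw [norm_mul, Complex.norm_conj]
  calc ‖a‖ * ‖Q‖ ≤ ‖a‖ * 1 :=
        mul_le_mul_of_nonneg_left hQ (norm_nonneg a)
    _ = ‖a‖ := mul_one _

/-- Dual certificate + linear independence imply that `z⋆` is the unique
minimizer of the constrained atomic norm subject to the measurement constraint. -/
theorem unique_minimizer_of_dual_certificate (N : ℕ) (hN : 2 ≤ N) (U : ℝ)
    (hU : U ∈ Set.Ioo (0 : ℝ) 1) (K : ℕ) (hK : K < N)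
    (c : Fin K → ℂ) (f θ : Fin K → ℝ)
    (hc : ∀ k, c k ≠ 0)
    (hf : ∀ k, f k ∈ Set.Ico (0 : ℝ) 1) (hθ : ∀ k, θ k ∈ Set.Icc (0 : ℝ) U)
    (hdist : Function.Injective (fun k => (f k, θ k)))
    (q : Fin N → ℂ)
    (hQeq : ∀ k, dualPoly N q (f k) (θ k) = c k / ((‖c k‖ : ℝ) : ℂ))
    (hQlt : ∀ f' θ' : ℝ, f' ∈ Set.Ico (0 : ℝ) 1 → θ' ∈ Set.Icc (0 : ℝ) U →
      (f', θ') ∉ Set.range (fun k => (f k, θ k)) →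
      ‖dualPoly N q f' θ'‖ < 1)
    (hind : LinearIndependent ℂ (fun k => meas N (atomD N (f k) (θ k)))) :
    ∀ z : Fin N × Fin ((N - 1) ^ 2 + 1) → ℂ,
      meas N z = meas N (∑ k, c k • atomD N (f k) (θ k)) →
      z ≠ ∑ k, c k • atomD N (f k) (θ k) →
      atomicNorm N U (∑ k, c k • atomD N (f k) (θ k)) < atomicNorm N U z := by
  classical
  intro z hmeasz hne
  set zs : Fin N × Fin ((N - 1) ^ 2 + 1) → ℂ := ∑ k, c k • atomD N (f k) (θ k) with hzs
  set A : ℝ := ∑ k, ‖c k‖ with hA_def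
  have hA : 0 ≤ A := Finset.sum_nonneg fun k _ => norm_nonneg _
  -- |Q| = 1 at the support points
  have hQabs1 : ∀ k, ‖dualPoly N q (f k) (θ k)‖ = 1 := by
    intro k
    rw [hQeq k, norm_div, Complex.norm_real,
      norm_norm, div_self (norm_ne_zero_iff.mpr (hc k))]
  -- |Q| ≤ 1 on the whole domain
  have hQle : ∀ f' θ' : ℝ, f' ∈ Set.Ico (0 : ℝ) 1 → θ' ∈ Set.Icc (0 : ℝ) U →
      ‖dualPoly N q f' θ'‖ ≤ 1 := by
    intro f' θ' hf' hθ'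
    by_cases hmem : (f', θ') ∈ Set.range (fun k => (f k, θ k))
    · obtain ⟨k, hk⟩ := hmem
      have h1 : f k = f' := congrArg Prod.fst hk
      have h2 : θ k = θ' := congrArg Prod.snd hk
      rw [← h1, ← h2]
      exact le_of_eq (hQabs1 k)
    · exact (hQlt f' θ' hf' hθ' hmem).le
  -- the dual linear functional evaluated at z⋆
  have hLzs : (∑ n : Fin N, q n * conj (meas N zs n)) = ((A : ℝ) : ℂ) := by
    rw [hzs, Lfun_sum]
    have hterm : ∀ k, conj (c k) * dualPoly N q (f k) (θ k)
        = ((‖c k‖ : ℝ) : ℂ) := by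
      intro k
      have hne0 : ((‖c k‖ : ℝ) : ℂ) ≠ 0 := by
        simpa using norm_ne_zero_iff.mpr (hc k)
      rw [hQeq k]
      field_simp
      rw [mul_comm, Complex.mul_conj, Complex.normSq_eq_norm_sq]
      push_cast
      ring
    rw [Finset.sum_congr rfl fun k _ => hterm k, hA_def]
    push_cast
    rfl
  -- dual lower bound for anything with the same measurements
  have hgen : ∀ w : Fin N × Fin ((N - 1) ^ 2 + 1) → ℂ, meas N w = meas N zs →
      ENNReal.ofReal A ≤ atomicNorm N U w := by
    intro w hw
    rw [atomicNorm]
    refine le_sInf fun s hs => ?_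
    obtain ⟨K', c', f', θ', hf', hθ', hwdec, hs_eq⟩ := hs
    have hsum : A ≤ ∑ j, ‖c' j‖ := by
      have hre : (∑ n : Fin N, q n * conj (meas N w n)).re = A := by
        rw [hw, hLzs]
        exact Complex.ofReal_re A
      have hbound : (∑ n : Fin N, q n * conj (meas N w n)).re
          ≤ ∑ j, ‖c' j‖ := by
        rw [hwdec, Lfun_sum, Complex.re_sum]
        exact Finset.sum_le_sum fun j _ =>
          re_term_le (c' j) _ (hQle (f' j) (θ' j) (hf' j) (hθ' j))
      linarith
    rw [hs_eq, ← ENNReal.ofReal_sum_of_nonneg (fun i _ => norm_nonneg _)]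
    exact ENNReal.ofReal_le_ofReal hsum
  -- the atomic norm of z⋆ equals A
  have hzs_le : atomicNorm N U zs ≤ ENNReal.ofReal A := by
    rw [atomicNorm]
    refine sInf_le ⟨K, c, f, θ, hf, hθ, hzs, ?_⟩
    rw [hA_def]
    exact ENNReal.ofReal_sum_of_nonneg (fun i _ => norm_nonneg _)
  have hzs_norm : atomicNorm N U zs = ENNReal.ofReal A :=
    le_antisymm hzs_le (hgen zs rfl)
  -- conclude by contradiction
  rw [hzs_norm]
  by_contra hnot
  push_neg at hnot
  have hz_norm : atomicNorm N U z = ENNReal.ofReal A :=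
    le_antisymm hnot (hgen z hmeasz)
  obtain ⟨K', c', f', θ', hf', hθ', hzdec, hsumA⟩ :=
    atomicNorm_attained N U hU.1.le z A hA hz_norm
  -- equality analysis
  have hre : (∑ j, conj (c' j) * dualPoly N q (f' j) (θ' j)).re = A := by
    rw [← Lfun_sum N q c' f' θ', ← hzdec, hmeasz, hLzs]
    exact Complex.ofReal_re A
  have hterm_le : ∀ j : Fin K', (conj (c' j) * dualPoly N q (f' j) (θ' j)).re
      ≤ ‖c' j‖ * ‖dualPoly N q (f' j) (θ' j)‖ := by
    intro j
    refine le_trans (Complex.re_le_norm _) ?_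
    rw [norm_mul, Complex.norm_conj]
  have hterm_le2 : ∀ j : Fin K',
      ‖c' j‖ * ‖dualPoly N q (f' j) (θ' j)‖ ≤ ‖c' j‖ := by
    intro j
    calc ‖c' j‖ * ‖dualPoly N q (f' j) (θ' j)‖
        ≤ ‖c' j‖ * 1 :=
          mul_le_mul_of_nonneg_left (hQle (f' j) (θ' j) (hf' j) (hθ' j))
            (norm_nonneg _)
      _ = ‖c' j‖ := mul_one _
  have hmid : (∑ j, ‖c' j‖ * ‖dualPoly N q (f' j) (θ' j)‖)
      = ∑ j, ‖c' j‖ := by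
    have hle : (∑ j, ‖c' j‖ * ‖dualPoly N q (f' j) (θ' j)‖)
        ≤ ∑ j, ‖c' j‖ := Finset.sum_le_sum fun j _ => hterm_le2 j
    have hge : A ≤ ∑ j, ‖c' j‖ * ‖dualPoly N q (f' j) (θ' j)‖ := by
      rw [← hre, Complex.re_sum]
      exact Finset.sum_le_sum fun j _ => hterm_le j
    rw [hsumA]
    linarith
  have htermeq : ∀ j : Fin K',
      ‖c' j‖ * ‖dualPoly N q (f' j) (θ' j)‖ = ‖c' j‖ := by
    intro j
    by_contra hcon
    have hstrict : ‖c' j‖ * ‖dualPoly N q (f' j) (θ' j)‖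
        < ‖c' j‖ := lt_of_le_of_ne (hterm_le2 j) hcon
    have hlt : (∑ i, ‖c' i‖ * ‖dualPoly N q (f' i) (θ' i)‖)
        < ∑ i, ‖c' i‖ :=
      Finset.sum_lt_sum (fun i _ => hterm_le2 i) ⟨j, Finset.mem_univ j, hstrict⟩
    rw [hmid] at hlt
    exact lt_irrefl _ hlt
  have hsupport : ∀ j : Fin K', c' j ≠ 0 → ∃ k, (f' j, θ' j) = (f k, θ k) := by
    intro j hj
    by_contra hcon
    push_neg at hcon
    have hnotmem : (f' j, θ' j) ∉ Set.range (fun k => (f k, θ k)) := by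
      rintro ⟨k, hk⟩
      exact hcon k hk.symm
    have hQsm := hQlt (f' j) (θ' j) (hf' j) (hθ' j) hnotmem
    have habsne : ‖c' j‖ ≠ 0 := norm_ne_zero_iff.mpr hj
    have h1 : ‖c' j‖ * ‖dualPoly N q (f' j) (θ' j)‖
        = ‖c' j‖ * 1 := by rw [mul_one]; exact htermeq j
    have hQ1 : ‖dualPoly N q (f' j) (θ' j)‖ = 1 := mul_left_cancel₀ habsne h1
    rw [hQ1] at hQsm
    exact lt_irrefl _ hQsm
  set c'' : Fin K → ℂ := fun k => ∑ j, if (f' j, θ' j) = (f k, θ k) then c' j else 0 with hc''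
  have claim1 : ∀ j : Fin K', c' j • atomD N (f' j) (θ' j)
      = ∑ k, (if (f' j, θ' j) = (f k, θ k) then c' j else 0) • atomD N (f k) (θ k) := by
    intro j
    by_cases hj : c' j = 0
    · simp [hj]
    · obtain ⟨k₀, hk₀⟩ := hsupport j hj
      rw [Finset.sum_eq_single k₀]
      · have h1 : f' j = f k₀ := congrArg Prod.fst hk₀
        have h2 : θ' j = θ k₀ := congrArg Prod.snd hk₀
        rw [if_pos hk₀, h1, h2]
      · intro k _ hkne
        rw [if_neg, zero_smul]
        intro hcontra
        exact hkne (hdist (hcontra.symm.trans hk₀))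
      · intro habs
        exact absurd (Finset.mem_univ k₀) habs
  have claim2 : z = ∑ k, c'' k • atomD N (f k) (θ k) := by
    rw [hzdec, Finset.sum_congr rfl fun j _ => claim1 j, Finset.sum_comm]
    exact Finset.sum_congr rfl fun k _ => by rw [hc'']; exact (Finset.sum_smul).symm
  have hmeq : ∀ k, c'' k = c k := by
    have hz0 : (∑ k, (c'' k - c k) • meas N (atomD N (f k) (θ k))) = 0 := by
      have h1 : meas N z = ∑ k, c'' k • meas N (atomD N (f k) (θ k)) := by
        rw [claim2, meas_sum_smul]
      have h2 : meas N zs = ∑ k, c k • meas N (atomD N (f k) (θ k)) := by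
        rw [hzs, meas_sum_smul]
      calc (∑ k, (c'' k - c k) • meas N (atomD N (f k) (θ k)))
          = (∑ k, c'' k • meas N (atomD N (f k) (θ k)))
            - ∑ k, c k • meas N (atomD N (f k) (θ k)) := by
            rw [← Finset.sum_sub_distrib]
            exact Finset.sum_congr rfl fun k _ => sub_smul _ _ _
        _ = meas N z - meas N zs := by rw [← h1, ← h2]
        _ = 0 := by rw [hmeasz, hzs, sub_self]
    have hli := Fintype.linearIndependent_iff.mp hind (fun k => c'' k - c k) hz0
    intro k
    exact sub_eq_zero.mp (hli k)
  exact hne (by rw [claim2, Finset.sum_congr rfl fun k _ => by rw [hmeq k]])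
end
end

section
/- Let N ≥ 2, M = (N−1)² + 1, U ∈ (0,1), and let (cₖ, fₖ, θₖ), k = 1,…,K, with cₖ ∈ ℂ \ {0}, fₖ ∈ [0,1), θₖ ∈ [0,U]. Set z* = Σₖ cₖ d(fₖ,θₖ). Suppose there exists q ∈ ℂ^N such that the dual polynomial Q(f,θ) = Σ_{n=0}^{N−1} q(n) e^{−2πi(fn+θn²)} satisfies Q(fₖ,θₖ) = cₖ/|cₖ| for every k and |Q(f,θ)| ≤ 1 for all (f,θ) ∈ [0,1)×[0,U]. Then ‖z*‖_{A_c} = Σₖ |cₖ|, and z* minimizes ‖z‖_{A_c} over all z ∈ ℂ^{NM} with P z = P z*. -/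
open Complex Set
open scoped Real ENNReal ComplexConjugate ComplexOrder

noncomputable section

lemma conj_meas_atom (N : ℕ) (fv θv : ℝ) (n : Fin N) :
    conj (meas N (atomD N fv θv) n) =
      Complex.exp (-(2 * (Real.pi : ℂ) * Complex.I) *
        ((fv : ℂ) * ((n : ℕ) : ℂ) + (θv : ℂ) * ((n : ℕ) : ℂ) ^ 2)) := by
  simp only [meas, atomD, atomA, atomB, map_mul]
  rw [← Complex.exp_conj, ← Complex.exp_conj, ← Complex.exp_add]
  congr 1
  simp only [map_mul, Complex.conj_I, Complex.conj_ofReal, map_ofNat, map_natCast]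
  push_cast
  ring

lemma L_eq (N : ℕ) (q : Fin N → ℂ) (K' : ℕ) (c' : Fin K' → ℂ) (f' θ' : Fin K' → ℝ) :
    (∑ n : Fin N, q n * conj (meas N (∑ j, c' j • atomD N (f' j) (θ' j)) n)) =
      ∑ j, conj (c' j) * dualPoly N q (f' j) (θ' j) := by
  have hm : ∀ n : Fin N, meas N (∑ j, c' j • atomD N (f' j) (θ' j)) n
      = ∑ j, c' j * meas N (atomD N (f' j) (θ' j)) n := by
    intro n; simp [meas, Finset.sum_apply]
  simp only [hm, map_sum, map_mul, Finset.mul_sum, conj_meas_atom]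
  rw [Finset.sum_comm]
  simp [dualPoly, Finset.mul_sum]
  congr 1; ext j; congr 1; ext n; ring

/-- A (non-strict) dual certificate implies that the atomic norm of `z⋆` is
`Σₖ |cₖ|` and that `z⋆` minimizes the constrained atomic norm subject to `Pz = Pz⋆`. -/
theorem atomicNorm_eq_and_min_of_dual_certificate (N : ℕ) (hN : 2 ≤ N) (U : ℝ)
    (hU : U ∈ Set.Ioo (0 : ℝ) 1) (K : ℕ) (c : Fin K → ℂ) (f θ : Fin K → ℝ)
    (hc : ∀ k, c k ≠ 0)
    (hf : ∀ k, f k ∈ Set.Ico (0 : ℝ) 1) (hθ : ∀ k, θ k ∈ Set.Icc (0 : ℝ) U)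
    (q : Fin N → ℂ)
    (hQeq : ∀ k, dualPoly N q (f k) (θ k) = c k / (‖c k‖ : ℂ))
    (hQle : ∀ f' θ' : ℝ, f' ∈ Set.Ico (0 : ℝ) 1 → θ' ∈ Set.Icc (0 : ℝ) U →
      ‖dualPoly N q f' θ'‖ ≤ 1) :
    atomicNorm N U (∑ k, c k • atomD N (f k) (θ k))
        = ∑ k, ENNReal.ofReal ‖c k‖ ∧
      ∀ z : Fin N × Fin ((N - 1) ^ 2 + 1) → ℂ,
        meas N z = meas N (∑ k, c k • atomD N (f k) (θ k)) →
        atomicNorm N U (∑ k, c k • atomD N (f k) (θ k)) ≤ atomicNorm N U z := by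
  set zstar := ∑ k, c k • atomD N (f k) (θ k) with hzstar
  have hLstar : (∑ n : Fin N, q n * conj (meas N zstar n))
      = ((∑ k, ‖c k‖ : ℝ) : ℂ) := by
    rw [hzstar, L_eq]
    push_cast
    refine Finset.sum_congr rfl fun k _ => ?_
    rw [hQeq k]
    have ha : (‖c k‖ : ℂ) ≠ 0 := by
      simpa using (hc k)
    field_simp
    rw [mul_comm, Complex.mul_conj, Complex.normSq_eq_norm_sq]
    push_cast
    ring
  have key : ∀ z : Fin N × Fin ((N - 1) ^ 2 + 1) → ℂ,
      meas N z = meas N zstar →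
      (∑ k, ENNReal.ofReal ‖c k‖) ≤ atomicNorm N U z := by
    intro z hm
    refine le_sInf fun s hs => ?_
    obtain ⟨K', c', f', θ', hf', hθ', hz, rfl⟩ := hs
    rw [← ENNReal.ofReal_sum_of_nonneg (fun k _ => norm_nonneg _),
        ← ENNReal.ofReal_sum_of_nonneg (fun k _ => norm_nonneg _)]
    refine ENNReal.ofReal_le_ofReal ?_
    have hLz : (∑ n : Fin N, q n * conj (meas N z n))
        = ∑ j, conj (c' j) * dualPoly N q (f' j) (θ' j) := by
      rw [hz]; exact L_eq N q K' c' f' θ'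
    calc ∑ k, ‖c k‖
        = ‖((∑ k, ‖c k‖ : ℝ) : ℂ)‖ := by
          rw [Complex.norm_real, Real.norm_of_nonneg
            (Finset.sum_nonneg fun k _ => norm_nonneg _)]
      _ = ‖∑ j, conj (c' j) * dualPoly N q (f' j) (θ' j)‖ := by
          rw [← hLstar, ← hm, hLz]
      _ ≤ ∑ j, ‖conj (c' j) * dualPoly N q (f' j) (θ' j)‖ :=
          norm_sum_le _ _
      _ ≤ ∑ j, ‖c' j‖ := by
          refine Finset.sum_le_sum fun j _ => ?_
          rw [norm_mul, Complex.norm_conj]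
          calc ‖c' j‖ * ‖dualPoly N q (f' j) (θ' j)‖
              ≤ ‖c' j‖ * 1 :=
                mul_le_mul_of_nonneg_left (hQle _ _ (hf' j) (hθ' j))
                  (norm_nonneg _)
            _ = ‖c' j‖ := mul_one _
  have hub : atomicNorm N U zstar ≤ ∑ k, ENNReal.ofReal ‖c k‖ :=
    sInf_le ⟨K, c, f, θ, hf, hθ, hzstar, rfl⟩
  have heq : atomicNorm N U zstar = ∑ k, ENNReal.ofReal ‖c k‖ :=
    le_antisymm hub (key zstar rfl)
  exact ⟨heq, fun z hm => heq ▸ key z hm⟩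

end
end
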